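/- Let C(x_1,...,x_r) = a_1 x_1^3 + ... + a_r x_r^3 be a primitive integral diagonal cubic form and p a prime. Suppose there exist indices i ≠ j such that p ∤ a_i, a_j = p^k ℓ with p ∤ ℓ and 3 | k (k ≥ 0), and a_i^{-1} ℓ is a cubic residue modulo p^α where α = 1 + ν_p(3). Then R(C) = { C(x)/C(y) : x, y ∈ Z^r, C(y) ≠ 0 } is dense in Q_p. -/

import Mathlib

section Helpers

variable {p : ℕ} [hp : Fact p.Prime]

lemma norm_eq_of_sub_lt' {a b : ℚ_[p]} (h : ‖a - b‖ < ‖b‖) : ‖a‖ = ‖b‖ := by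
  rcases eq_or_ne ‖a - b‖ ‖b‖ with he | hne
  · exact absurd h (by rw [he]; exact lt_irrefl _)
  · calc ‖a‖ = ‖(a - b) + b‖ := by ring_nf
    _ = max ‖a - b‖ ‖b‖ := Padic.add_eq_max_of_ne hne
    _ = ‖b‖ := max_eq_right h.le

lemma int_norm_eq_of_sub_lt {a b : ℤ_[p]} (h : ‖a - b‖ < ‖b‖) : ‖a‖ = ‖b‖ := by
  rw [PadicInt.norm_def] at *
  rw [PadicInt.coe_sub] at h
  exact norm_eq_of_sub_lt' h

lemma cube_sub_cube_norm {a b : ℚ_[p]} (ha : ‖a‖ ≤ 1) (hb : ‖b‖ ≤ 1) :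
    ‖a ^ 3 - b ^ 3‖ ≤ ‖a - b‖ := by
  have h : a ^ 3 - b ^ 3 = (a - b) * (a ^ 2 + a * b + b ^ 2) := by ring
  rw [h, norm_mul]
  have h1 : ‖a ^ 2 + a * b + b ^ 2‖ ≤ 1 := by
    refine le_trans (Padic.nonarchimedean _ _)
      (max_le (le_trans (Padic.nonarchimedean _ _) (max_le ?_ ?_)) ?_)
    · rw [norm_pow]; exact pow_le_one₀ (norm_nonneg _) ha
    · rw [norm_mul]; exact mul_le_one₀ ha (norm_nonneg _) hb
    · rw [norm_pow]; exact pow_le_one₀ (norm_nonneg _) hb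
  calc ‖a - b‖ * ‖a ^ 2 + a * b + b ^ 2‖ ≤ ‖a - b‖ * 1 :=
        mul_le_mul_of_nonneg_left h1 (norm_nonneg _)
    _ = ‖a - b‖ := mul_one _

lemma cube_hensel {u x₁ : ℤ_[p]} (h : ‖x₁ ^ 3 - u‖ < ‖3 * x₁ ^ 2‖ ^ 2) :
    ∃ z : ℤ_[p], z ^ 3 = u := by
  have h' : ‖(Polynomial.X ^ 3 - Polynomial.C u : Polynomial ℤ_[p]).eval x₁‖ <
      ‖((Polynomial.X ^ 3 - Polynomial.C u : Polynomial ℤ_[p]).derivative).eval x₁‖ ^ 2 := by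
    simpa [show ((2:ℤ_[p]) + 1) = 3 by norm_num] using h
  obtain ⟨z, hz, -⟩ := hensels_lemma h'
  refine ⟨z, ?_⟩
  have : z ^ 3 - u = 0 := by simpa using hz
  exact sub_eq_zero.mp this

lemma real_cube_eq_one {x : ℝ} (hx : 0 ≤ x) (h : x ^ 3 = 1) : x = 1 := by
  nlinarith [sq_nonneg (x - 1), sq_nonneg (x + 1), sq_nonneg x]

lemma cube_root_exists (u x₀ : ℤ_[p]) (hu : ‖u‖ = 1)
    (h : ‖x₀ ^ 3 - u‖ ≤ (p : ℝ) ^ (-(1 + padicValNat p 3 : ℕ) : ℤ)) :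
    ∃ c : ℤ_[p], c ^ 3 = u ∧ ‖c‖ = 1 := by
  have hp1 : (1 : ℝ) < p := by exact_mod_cast hp.out.one_lt
  have hsmall : (p : ℝ) ^ (-(1 + padicValNat p 3 : ℕ) : ℤ) < 1 :=
    zpow_lt_one_of_neg₀ hp1 (by omega)
  have hlt1 : ‖x₀ ^ 3 - u‖ < 1 := lt_of_le_of_lt h hsmall
  have hx3 : ‖x₀ ^ 3‖ = 1 := by
    rw [← hu]; exact int_norm_eq_of_sub_lt (by rw [hu]; exact hlt1)
  have hnx : ‖x₀‖ = 1 := by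
    apply real_cube_eq_one (norm_nonneg _)
    rw [← norm_pow]; exact hx3
  have hcr : ∃ z : ℤ_[p], z ^ 3 = u := by
    rcases eq_or_ne p 3 with h3 | h3
    · subst h3
      have hval : padicValNat 3 3 = 1 := padicValNat.self (by norm_num)
      rw [hval] at h
      have h9 : ((3:ℕ) : ℤ_[3]) ^ 2 ∣ (x₀ ^ 3 - u) := by
        rw [← Ideal.mem_span_singleton, ← PadicInt.norm_le_pow_iff_mem_span_pow]
        simpa using h
      obtain ⟨t, ht⟩ := h9
      push_cast at ht
      obtain ⟨y, hy⟩ := isUnit_iff_exists_inv.mp (PadicInt.isUnit_iff.mpr hnx)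
      set x₁ : ℤ_[3] := x₀ - 3 * (t * y ^ 2) with hx₁def
      have hid : x₁ ^ 3 - u = 27 * (x₀ * (t * y ^ 2) ^ 2 - (t * y ^ 2) ^ 3) := by
        rw [hx₁def]
        linear_combination ht - 9 * t * (x₀ * y + 1) * hy
      have hn27 : ‖(27 : ℤ_[3])‖ = (3 : ℝ)⁻¹ ^ 3 := by
        have : (27 : ℤ_[3]) = ((3:ℕ) : ℤ_[3]) ^ 3 := by norm_num
        rw [this, norm_pow, PadicInt.norm_p]
        norm_num
      have hnx₁ : ‖x₁‖ = 1 := by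
        rw [← hnx]
        apply int_norm_eq_of_sub_lt
        have : x₁ - x₀ = -(3 * (t * y ^ 2)) := by rw [hx₁def]; ring
        rw [this, norm_neg, hnx]
        calc ‖(3 : ℤ_[3]) * (t * y ^ 2)‖ ≤ ‖(3 : ℤ_[3])‖ * 1 := by
              rw [norm_mul]
              exact mul_le_mul_of_nonneg_left (PadicInt.norm_le_one _) (norm_nonneg _)
        _ < 1 := by
              rw [mul_one]
              have : ((3:ℕ) : ℤ_[3]) = (3 : ℤ_[3]) := by norm_num
              rw [← this, PadicInt.norm_p]
              norm_num
      apply cube_hensel (x₁ := x₁)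
      have hd : ‖3 * x₁ ^ 2‖ = (3:ℝ)⁻¹ := by
        rw [norm_mul, norm_pow, hnx₁]
        have : ((3:ℕ) : ℤ_[3]) = (3 : ℤ_[3]) := by norm_num
        rw [← this, PadicInt.norm_p]
        norm_num
      rw [hd, hid, norm_mul, hn27]
      calc (3:ℝ)⁻¹ ^ 3 * ‖x₀ * (t * y ^ 2) ^ 2 - (t * y ^ 2) ^ 3‖ ≤ (3:ℝ)⁻¹ ^ 3 * 1 := by
            apply mul_le_mul_of_nonneg_left (PadicInt.norm_le_one _) (by positivity)
      _ < ((3:ℝ)⁻¹) ^ 2 := by norm_num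
    · have hval : padicValNat p 3 = 0 := by
        apply padicValNat.eq_zero_of_not_dvd
        intro hdvd
        exact h3 ((Nat.prime_dvd_prime_iff_eq hp.out (by norm_num)).mp hdvd)
      rw [hval] at h
      have hn3 : ‖(3 : ℤ_[p])‖ = 1 := by
        have h31 : ¬ ((p : ℤ) ∣ 3) := by
          intro hdvd
          have hnd : p ∣ 3 := by exact_mod_cast hdvd
          exact h3 ((Nat.prime_dvd_prime_iff_eq hp.out (by norm_num)).mp hnd)
        have : ((3 : ℤ) : ℤ_[p]) = (3 : ℤ_[p]) := by norm_num
        refine le_antisymm (PadicInt.norm_le_one _) ?_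
        by_contra hlt
        push_neg at hlt
        rw [← this] at hlt
        exact h31 ((PadicInt.norm_int_lt_one_iff_dvd 3).mp hlt)
      apply cube_hensel (x₁ := x₀)
      rw [norm_mul, norm_pow, hn3, hnx]
      calc ‖x₀ ^ 3 - u‖ ≤ (p:ℝ) ^ (-(1 + 0 : ℕ) : ℤ) := h
      _ < 1 := by apply zpow_lt_one_of_neg₀ hp1; omega
      _ = (1 * 1 ^ 2) ^ 2 := by norm_num

  obtain ⟨c, hc⟩ := hcr
  refine ⟨c, hc, ?_⟩
  apply real_cube_eq_one (norm_nonneg _)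
  rw [← norm_pow, hc, hu]

lemma norm_three_padic : ‖(3 : ℚ_[p])‖ = (p : ℝ) ^ (-(padicValNat p 3 : ℤ)) := by
  rcases eq_or_ne p 3 with h3 | h3
  · subst h3
    rw [padicValNat.self (by norm_num)]
    have : (3 : ℚ_[3]) = ((3:ℕ) : ℚ_[3]) := by norm_num
    rw [this, Padic.norm_p]
    norm_num
  · rw [padicValNat.eq_zero_of_not_dvd
      (fun hdvd => h3 ((Nat.prime_dvd_prime_iff_eq hp.out (by norm_num)).mp hdvd))]
    have h31 : ¬ ((p : ℤ) ∣ 3) := by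
      intro hdvd
      have hnd : p ∣ 3 := by exact_mod_cast hdvd
      exact h3 ((Nat.prime_dvd_prime_iff_eq hp.out (by norm_num)).mp hnd)
    have hcast : ((3 : ℤ) : ℚ_[p]) = (3 : ℚ_[p]) := by norm_num
    rw [Nat.cast_zero, neg_zero, zpow_zero]
    refine le_antisymm ?_ ?_
    · rw [← hcast]; exact Padic.norm_int_le_one 3
    · by_contra hlt
      push_neg at hlt
      rw [← hcast] at hlt
      exact h31 ((Padic.norm_intCast_lt_one_iff (k := 3)).mp hlt)


theorem stmt_15 (p : ℕ) [Fact p.Prime] (r : ℕ) (a : Fin r → ℤ)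
    (hprim : Finset.univ.gcd (fun i => (a i).natAbs) = 1)
    (i j : Fin r) (hij : i ≠ j) (k : ℕ) (l a' : ℤ)
    (hai : ¬ (p : ℤ) ∣ a i) (haj : a j = (p : ℤ) ^ k * l) (hl : ¬ (p : ℤ) ∣ l)
    (hk : 3 ∣ k)
    (hinv : a i * a' ≡ 1 [ZMOD ((p : ℤ) ^ (1 + padicValNat p 3))])
    (hres : ∃ x : ℤ, x ^ 3 ≡ a' * l [ZMOD ((p : ℤ) ^ (1 + padicValNat p 3))]) :
    Dense {q : ℚ_[p] | ∃ x y : Fin r → ℤ, (∑ t, a t * (y t) ^ 3) ≠ 0 ∧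
      q = ((∑ t, a t * (x t) ^ 3 : ℤ) : ℚ_[p]) / ((∑ t, a t * (y t) ^ 3 : ℤ) : ℚ_[p])} := by
  classical
  obtain ⟨x0, hx0⟩ := hres
  have hp' : p.Prime := Fact.out
  set ν3 : ℕ := padicValNat p 3 with hν3
  have hp1 : (1:ℝ) < p := by exact_mod_cast hp'.one_lt
  have hp0 : (0:ℝ) < p := lt_trans one_pos hp1
  -- divisibility
  have hcomb : ((p:ℤ) ^ (1 + ν3)) ∣ (a i * x0 ^ 3 - l) := by
    have d1 : ((p:ℤ) ^ (1 + ν3)) ∣ (1 - a i * a') := hinv.dvd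
    have d2 : ((p:ℤ) ^ (1 + ν3)) ∣ (a' * l - x0 ^ 3) := hx0.dvd
    have hre : a i * x0 ^ 3 - l = (-(a i)) * (a' * l - x0 ^ 3) + (-l) * (1 - a i * a') := by
      ring
    rw [hre]
    exact dvd_add (d2.mul_left _) (d1.mul_left _)
  -- unit norms
  have hnai : ‖((a i : ℤ_[p]))‖ = 1 := by
    refine le_antisymm (PadicInt.norm_le_one _) ?_
    by_contra hlt; push_neg at hlt
    exact hai ((PadicInt.norm_int_lt_one_iff_dvd _).mp hlt)
  have hnl : ‖((l : ℤ_[p]))‖ = 1 := by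
    refine le_antisymm (PadicInt.norm_le_one _) ?_
    by_contra hlt; push_neg at hlt
    exact hl ((PadicInt.norm_int_lt_one_iff_dvd _).mp hlt)
  obtain ⟨b, hb⟩ := isUnit_iff_exists_inv.mp (PadicInt.isUnit_iff.mpr hnai)
  have hnb : ‖b‖ = 1 := by
    have h1 := norm_mul ((a i : ℤ_[p])) b
    rw [hb, norm_one, hnai, one_mul] at h1
    exact h1.symm
  have hnu : ‖(l : ℤ_[p]) * b‖ = 1 := by rw [norm_mul, hnl, hnb, one_mul]
  have hxu : ‖((x0 : ℤ_[p])) ^ 3 - (l : ℤ_[p]) * b‖ ≤ (p : ℝ) ^ (-(1 + ν3 : ℕ) : ℤ) := by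
    have hnint : ‖((a i * x0 ^ 3 - l : ℤ) : ℤ_[p])‖ ≤ (p : ℝ) ^ (-(1 + ν3 : ℕ) : ℤ) := by
      rw [PadicInt.norm_int_le_pow_iff_dvd]
      exact_mod_cast hcomb
    have hfact : ((x0 : ℤ_[p])) ^ 3 - (l : ℤ_[p]) * b
        = b * ((a i * x0 ^ 3 - l : ℤ) : ℤ_[p]) := by
      push_cast
      linear_combination (-((x0 : ℤ_[p])) ^ 3) * hb
    rw [hfact, norm_mul, hnb, one_mul]
    exact hnint
  obtain ⟨c, hc3, hnc⟩ := cube_root_exists ((l : ℤ_[p]) * b) ((x0 : ℤ_[p])) hnu hxu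
  have key : (a i : ℤ_[p]) * c ^ 3 = (l : ℤ_[p]) := by
    rw [hc3]
    linear_combination (l : ℤ_[p]) * hb
  -- move to ℚ_[p]
  set C : ℚ_[p] := ((c : ℤ_[p]) : ℚ_[p]) with hCdef
  have hnC : ‖C‖ = 1 := by rw [hCdef, ← PadicInt.norm_def]; exact hnc
  have hCne : C ≠ 0 := by
    intro h0; rw [h0, norm_zero] at hnC; norm_num at hnC
  have keyQ : ((a i : ℚ_[p])) * C ^ 3 = (l : ℚ_[p]) := by
    have h1 := congrArg (fun z : ℤ_[p] => (z : ℚ_[p])) key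
    simp only [PadicInt.coe_mul, PadicInt.coe_pow, PadicInt.coe_intCast] at h1
    exact h1
  have hn3 : ‖(3 : ℚ_[p])‖ = (p : ℝ) ^ (-(ν3 : ℤ)) := norm_three_padic
  have h3ne : (3 : ℚ_[p]) ≠ 0 := by
    intro h0
    rw [h0, norm_zero] at hn3
    exact absurd hn3.symm (ne_of_gt (by positivity))
  have ha0 : a i ≠ 0 := by
    intro h0; exact hai (by rw [h0]; exact dvd_zero _)
  rw [Metric.dense_iff]
  intro q ε hε
  rcases eq_or_ne q 0 with rfl | hq
  · -- q = 0
    refine ⟨0, Metric.mem_ball_self hε, 0,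
      (fun t => if t = i then 1 else 0), ?_, ?_⟩
    · have hsum : (∑ t, a t * ((if t = i then (1:ℤ) else 0)) ^ 3) = a i := by
        have hpt : ∀ t : Fin r, a t * ((if t = i then (1:ℤ) else 0)) ^ 3
            = if t = i then a t else 0 := by
          intro t; split <;> simp
        rw [Finset.sum_congr rfl fun t _ => hpt t, Finset.sum_ite_eq' Finset.univ i (fun t => a t)]
        simp
      rw [hsum]
      exact ha0
    · simp
  · -- q ≠ 0
    set v : ℤ := q.valuation with hvdef
    have hqn : ‖q‖ = (p:ℝ) ^ (-v) := Padic.norm_eq_zpow_neg_valuation hq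
    have hqpos : 0 < ‖q‖ := norm_pos_iff.mpr hq
    have hinvp : (p:ℝ)⁻¹ < 1 := inv_lt_one_of_one_lt₀ hp1
    obtain ⟨G, hG⟩ : ∃ G : ℕ, (p:ℝ) ^ (ν3:ℤ) * ‖q‖ * ((p:ℝ)⁻¹) ^ G < ε := by
      obtain ⟨G, hG⟩ := exists_pow_lt_of_lt_one
        (show (0:ℝ) < ε / ((p:ℝ) ^ (ν3:ℤ) * ‖q‖) by positivity) hinvp
      refine ⟨G, ?_⟩
      have h2 := (lt_div_iff₀ (show (0:ℝ) < (p:ℝ) ^ (ν3:ℤ) * ‖q‖ by positivity)).mp hG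
      linarith [h2]
    obtain ⟨G2, hG2⟩ : ∃ G2 : ℕ, ((p:ℝ)⁻¹) ^ G2 < ε := exists_pow_lt_of_lt_one hε hinvp
    obtain ⟨k', hk'⟩ := hk
    -- choose exponents
    have hv_le : v ≤ (v.natAbs : ℤ) := Int.le_natAbs
    set A : ℕ := k' + G + ν3 + v.natAbs + 1 with hAdef
    have hAk' : k' ≤ A := by omega
    set t0 : ℤ := (v - 2*(ν3:ℤ) - (G:ℤ)) % 3 with ht0def
    have ht0n : 0 ≤ t0 := Int.emod_nonneg _ (by norm_num)
    have ht0lt : t0 < 3 := Int.emod_lt_of_pos _ (by norm_num)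
    set B : ℕ := A + G + ν3 + t0.toNat with hBdef
    have hBcast : (B:ℤ) = A + G + ν3 + t0 := by
      rw [hBdef]; push_cast; omega
    have hBA : (A:ℤ) + G + ν3 ≤ (B:ℤ) := by omega
    obtain ⟨m, hm⟩ : ∃ m : ℕ, (3:ℤ) * (m:ℤ) = 2*(A:ℤ) + (B:ℤ) + (ν3:ℤ) - v := by
      have hdiv : (3:ℤ) ∣ (2*(A:ℤ) + (B:ℤ) + (ν3:ℤ) - v) := by
        rw [hBcast, ht0def]
        omega
      obtain ⟨d, hd⟩ := hdiv
      have hdnn : 0 ≤ d := by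
        have hApos : (v.natAbs : ℤ) + 1 ≤ (A:ℤ) := by rw [hAdef]; push_cast; omega
        omega
      exact ⟨d.toNat, by omega⟩
    -- p-adic objects
    set P : ℚ_[p] := (p : ℚ_[p]) with hPdef
    have hPne : P ≠ 0 := by
      have hnp : ‖P‖ = (p:ℝ)⁻¹ := Padic.norm_p
      intro h0
      rw [h0, norm_zero] at hnp
      exact absurd hnp.symm (ne_of_gt (by positivity))
    have hnPz : ∀ n : ℤ, ‖P ^ n‖ = (p:ℝ) ^ (-n) := fun n => Padic.norm_p_zpow n
    set w : ℚ_[p] := q * P ^ ((ν3:ℤ) - v) * ((3:ℚ_[p]) * C ^ 2)⁻¹ with hwdef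
    have h3C : (3:ℚ_[p]) * C ^ 2 ≠ 0 := mul_ne_zero h3ne (pow_ne_zero _ hCne)
    have h3cw : (3:ℚ_[p]) * C ^ 2 * w = q * P ^ ((ν3:ℤ) - v) := by
      rw [hwdef]
      field_simp
    have hnw : ‖w‖ = 1 := by
      rw [hwdef, norm_mul, norm_mul, norm_inv, norm_mul, norm_pow,
        hn3, hnC, hqn, hnPz]
      rw [one_pow, mul_one]
      rw [← zpow_add₀ (ne_of_gt hp0), ← zpow_neg, ← zpow_add₀ (ne_of_gt hp0)]
      rw [show (-v + -((ν3:ℤ) - v) + - -(ν3:ℤ)) = 0 by ring]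
      norm_num
    set W : ℚ_[p] := P ^ (B:ℤ) * w with hWdef
    set Z : ℚ_[p] := P ^ (A:ℤ) with hZdef
    set T : ℚ_[p] := W - C * Z with hTdef
    have identity1 : (a i : ℚ_[p]) * T ^ 3 + (l:ℚ_[p]) * Z ^ 3
        = (a i : ℚ_[p]) * ((3:ℚ_[p]) * C^2 * Z^2 * W + (W^3 - 3*C*W^2*Z)) := by
      rw [hTdef]
      linear_combination (-(Z^3)) * keyQ
    have hzsq : (P ^ (A:ℤ)) ^ 2 = P ^ (2*(A:ℤ)) := by
      rw [← zpow_natCast (P ^ (A:ℤ)) 2, ← zpow_mul]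
      congr 1
      ring
    have identity2 : (3:ℚ_[p]) * C ^ 2 * Z ^ 2 * W = q * P ^ (3*(m:ℤ)) := by
      rw [hZdef, hWdef]
      calc (3:ℚ_[p]) * C^2 * (P ^ (A:ℤ))^2 * (P ^ (B:ℤ) * w)
          = ((3:ℚ_[p]) * C^2 * w) * ((P ^ (A:ℤ))^2 * P ^ (B:ℤ)) := by ring
        _ = (q * P ^ ((ν3:ℤ) - v)) * (P ^ (2*(A:ℤ)) * P ^ (B:ℤ)) := by rw [h3cw, hzsq]
        _ = q * (P ^ ((ν3:ℤ) - v) * (P ^ (2*(A:ℤ)) * P ^ (B:ℤ))) := by ring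
        _ = q * P ^ (((ν3:ℤ) - v) + (2*(A:ℤ) + (B:ℤ))) := by
            rw [← zpow_add₀ hPne, ← zpow_add₀ hPne]
        _ = q * P ^ (3*(m:ℤ)) := by
            rw [show ((ν3:ℤ) - v) + (2*(A:ℤ) + (B:ℤ)) = 3*(m:ℤ) by omega]
    -- norms of building blocks
    have hnZ : ‖Z‖ = (p:ℝ) ^ (-(A:ℤ)) := hnPz _
    have hnW : ‖W‖ = (p:ℝ) ^ (-(B:ℤ)) := by
      rw [hWdef, norm_mul, hnw, mul_one]; exact hnPz _
    have hle1 : ∀ n : ℕ, (p:ℝ) ^ (-(n:ℤ)) ≤ 1 := fun n =>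
      zpow_le_one_of_nonpos₀ hp1.le (by omega)
    have hTnorm : ‖T‖ ≤ 1 := by
      rw [hTdef]
      calc ‖W - C * Z‖ ≤ max ‖W‖ ‖C * Z‖ := by
            simpa [sub_eq_add_neg] using Padic.nonarchimedean W (-(C * Z))
      _ ≤ 1 := max_le (by rw [hnW]; exact hle1 B)
            (by rw [norm_mul, hnC, one_mul, hnZ]; exact hle1 A)
    set E' : ℕ := 3*m + G2 with hE'def
    set Xp : ℤ_[p] := ⟨T, hTnorm⟩ with hXpdef
    set Xt : ℤ := (Xp.appr E' : ℤ) with hXtdef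
    have hXt : ‖T - ((Xt : ℤ) : ℚ_[p])‖ ≤ (p:ℝ) ^ (-(E' : ℕ) : ℤ) := by
      have h1 : ‖Xp - ((Xp.appr E' : ℕ) : ℤ_[p])‖ ≤ (p:ℝ) ^ (-(E' : ℕ) : ℤ) := by
        rw [PadicInt.norm_le_pow_iff_mem_span_pow]
        exact PadicInt.appr_spec E' Xp
      rw [PadicInt.norm_def, PadicInt.coe_sub] at h1
      have h2 : ((Xp : ℚ_[p])) = T := rfl
      have h3 : (((Xp.appr E' : ℕ) : ℤ_[p]) : ℚ_[p]) = ((Xt : ℤ) : ℚ_[p]) := by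
        rw [hXtdef]; push_cast; rfl
      rw [h2, h3] at h1
      exact h1
    -- integer data
    set Y : ℤ := (p:ℤ) ^ (A - k') with hYdef
    have hYl : a j * Y ^ 3 = l * (p:ℤ) ^ (3*A) := by
      rw [haj, hYdef, ← pow_mul]
      rw [mul_comm ((p:ℤ)^k) l, mul_assoc, ← pow_add]
      rw [show k + (A - k')*3 = 3*A by omega]
    have hsum_x : (∑ t, a t * ((if t = i then Xt else if t = j then Y else 0)) ^ 3)
        = a i * Xt ^ 3 + a j * Y ^ 3 := by
      have hpt : ∀ t : Fin r, a t * ((if t = i then Xt else if t = j then Y else 0)) ^ 3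
          = (if t = i then a t * Xt ^ 3 else 0) + (if t = j then a t * Y ^ 3 else 0) := by
        intro t
        by_cases h1 : t = i
        · subst h1
          rw [if_pos rfl, if_pos rfl, if_neg hij, add_zero]
        · rw [if_neg h1, if_neg h1]
          by_cases h2 : t = j
          · subst h2
            rw [if_pos rfl, if_pos rfl, zero_add]
          · rw [if_neg h2, if_neg h2]
            simp
      rw [Finset.sum_congr rfl fun t _ => hpt t, Finset.sum_add_distrib,
        Finset.sum_ite_eq' Finset.univ i (fun t => a t * Xt ^ 3),
        Finset.sum_ite_eq' Finset.univ j (fun t => a t * Y ^ 3)]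
      simp
    have hsum_y : (∑ t, a t * ((if t = i then (p:ℤ)^m else 0)) ^ 3) = a i * (p:ℤ) ^ (3*m) := by
      have hpt : ∀ t : Fin r, a t * ((if t = i then (p:ℤ)^m else 0)) ^ 3
          = if t = i then a t * (p:ℤ)^(3*m) else 0 := by
        intro t
        split
        · rw [← pow_mul, mul_comm m 3]
        · simp
      rw [Finset.sum_congr rfl fun t _ => hpt t,
        Finset.sum_ite_eq' Finset.univ i (fun t => a t * (p:ℤ)^(3*m))]
      simp
    have hpz : (p:ℤ) ≠ 0 := by exact_mod_cast hp'.ne_zero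
    have hden0 : a i * (p:ℤ) ^ (3*m) ≠ 0 := mul_ne_zero ha0 (pow_ne_zero _ hpz)
    -- casts
    have hZnat : Z ^ 3 = P ^ ((3*A : ℕ) : ℤ) := by
      rw [hZdef, ← zpow_natCast (P ^ (A:ℤ)) 3, ← zpow_mul]
      congr 1
      push_cast
      ring
    have hnum_cast : ((a i * Xt ^ 3 + a j * Y ^ 3 : ℤ) : ℚ_[p])
        = (a i : ℚ_[p]) * ((Xt : ℤ) : ℚ_[p]) ^ 3 + (l : ℚ_[p]) * Z ^ 3 := by
      rw [show (a i * Xt ^ 3 + a j * Y ^ 3 : ℤ) = a i * Xt ^ 3 + l * (p:ℤ)^(3*A) from by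
        rw [← hYl]]
      push_cast
      rw [hZnat, zpow_natCast]
    have hden_cast : ((a i * (p:ℤ) ^ (3*m) : ℤ) : ℚ_[p]) = (a i : ℚ_[p]) * P ^ (3*(m:ℤ)) := by
      push_cast
      rw [← zpow_natCast P (3*m), show ((3*m : ℕ) : ℤ) = 3*(m:ℤ) from by push_cast; ring]
    have haiQ : (a i : ℚ_[p]) ≠ 0 := Int.cast_ne_zero.mpr ha0
    have hP3m : P ^ (3*(m:ℤ)) ≠ 0 := zpow_ne_zero _ hPne
    have hnum_id : (a i : ℚ_[p]) * ((Xt : ℤ) : ℚ_[p]) ^ 3 + (l : ℚ_[p]) * Z ^ 3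
        = (a i : ℚ_[p]) * (q * P ^ (3*(m:ℤ))
            + ((W^3 - 3*C*W^2*Z) + (((Xt : ℤ) : ℚ_[p]) ^ 3 - T ^ 3))) := by
      linear_combination identity1 + (a i : ℚ_[p]) * identity2
    have hval : ((a i * Xt ^ 3 + a j * Y ^ 3 : ℤ) : ℚ_[p]) / ((a i * (p:ℤ) ^ (3*m) : ℤ) : ℚ_[p])
        = q + ((W^3 - 3*C*W^2*Z) + (((Xt : ℤ) : ℚ_[p]) ^ 3 - T ^ 3)) / P ^ (3*(m:ℤ)) := by
      rw [hnum_cast, hden_cast, hnum_id, mul_div_mul_left _ _ haiQ]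
      field_simp
    refine ⟨((a i * Xt ^ 3 + a j * Y ^ 3 : ℤ) : ℚ_[p]) / ((a i * (p:ℤ) ^ (3*m) : ℤ) : ℚ_[p]),
      Set.mem_inter ?_ ⟨(fun t => if t = i then Xt else if t = j then Y else 0),
        (fun t => if t = i then (p:ℤ)^m else 0),
        by rw [hsum_y]; exact hden0, by rw [hsum_x, hsum_y]⟩⟩
    rw [Metric.mem_ball, dist_eq_norm, hval, add_sub_cancel_left, norm_div, hnPz,
      div_eq_mul_inv, ← zpow_neg, neg_neg]
    -- now : ‖E + Δ‖ * p^(3m) < ε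
    have hmono : ∀ {s t : ℤ}, s ≤ t → (p:ℝ) ^ s ≤ (p:ℝ) ^ t := fun h =>
      zpow_le_zpow_right₀ hp1.le h
    have hppos : ∀ s : ℤ, (0:ℝ) < (p:ℝ) ^ s := fun s => zpow_pos hp0 s
    have hzp3 : ∀ s : ℤ, ((p:ℝ) ^ s) ^ (3:ℕ) = (p:ℝ) ^ (s*3) := fun s => by
      rw [← zpow_natCast ((p:ℝ) ^ s) 3, ← zpow_mul]
      norm_num
    have hzp2 : ∀ s : ℤ, ((p:ℝ) ^ s) ^ (2:ℕ) = (p:ℝ) ^ (s*2) := fun s => by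
      rw [← zpow_natCast ((p:ℝ) ^ s) 2, ← zpow_mul]
      norm_num
    have hEbound : ‖W^3 - 3*C*W^2*Z‖ ≤ (p:ℝ) ^ ((ν3:ℤ) - v - (G:ℤ) - 3*(m:ℤ)) := by
      have h1 : ‖W^3‖ ≤ (p:ℝ) ^ ((ν3:ℤ) - v - (G:ℤ) - 3*(m:ℤ)) := by
        rw [norm_pow, hnW, hzp3]
        apply hmono
        omega
      have h2 : ‖3*C*W^2*Z‖ ≤ (p:ℝ) ^ ((ν3:ℤ) - v - (G:ℤ) - 3*(m:ℤ)) := by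
        rw [norm_mul, norm_mul, norm_mul, hn3, hnC, norm_pow, hnW, hnZ,
          hzp2, mul_one, ← zpow_add₀ (ne_of_gt hp0), ← zpow_add₀ (ne_of_gt hp0)]
        apply hmono
        omega
      calc ‖W^3 - 3*C*W^2*Z‖ = ‖W^3 + -(3*C*W^2*Z)‖ := by rw [sub_eq_add_neg]
      _ ≤ max ‖W^3‖ ‖-(3*C*W^2*Z)‖ := Padic.nonarchimedean _ _
      _ = max ‖W^3‖ ‖3*C*W^2*Z‖ := by rw [norm_neg]
      _ ≤ (p:ℝ) ^ ((ν3:ℤ) - v - (G:ℤ) - 3*(m:ℤ)) := max_le h1 h2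
    have hXtnorm : ‖((Xt : ℤ) : ℚ_[p])‖ ≤ 1 := Padic.norm_int_le_one _
    have hDelta : ‖((Xt : ℤ) : ℚ_[p])^3 - T^3‖ ≤ (p:ℝ) ^ (-(E' : ℕ) : ℤ) := by
      refine le_trans (cube_sub_cube_norm hXtnorm hTnorm) ?_
      rw [norm_sub_rev]
      exact hXt
    have hsumb : ‖(W^3 - 3*C*W^2*Z) + (((Xt : ℤ) : ℚ_[p]) ^ 3 - T ^ 3)‖
        ≤ max ((p:ℝ) ^ ((ν3:ℤ) - v - (G:ℤ) - 3*(m:ℤ))) ((p:ℝ) ^ (-(E' : ℕ) : ℤ)) :=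
      le_trans (Padic.nonarchimedean _ _) (max_le_max hEbound hDelta)
    calc ‖(W^3 - 3*C*W^2*Z) + (((Xt : ℤ) : ℚ_[p]) ^ 3 - T ^ 3)‖ * (p:ℝ) ^ (3*(m:ℤ))
        ≤ max ((p:ℝ) ^ ((ν3:ℤ) - v - (G:ℤ) - 3*(m:ℤ))) ((p:ℝ) ^ (-(E' : ℕ) : ℤ))
          * (p:ℝ) ^ (3*(m:ℤ)) :=
          mul_le_mul_of_nonneg_right hsumb (le_of_lt (hppos _))
    _ = max ((p:ℝ) ^ ((ν3:ℤ) - v - (G:ℤ) - 3*(m:ℤ)) * (p:ℝ) ^ (3*(m:ℤ)))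
          ((p:ℝ) ^ (-(E' : ℕ) : ℤ) * (p:ℝ) ^ (3*(m:ℤ))) :=
          max_mul_of_nonneg _ _ (le_of_lt (hppos _))
    _ < ε := by
        apply max_lt
        · rw [← zpow_add₀ (ne_of_gt hp0)]
          have he : (p:ℝ) ^ ((ν3:ℤ) - v - (G:ℤ) - 3*(m:ℤ) + 3*(m:ℤ))
              = (p:ℝ) ^ ((ν3:ℤ)) * ‖q‖ * ((p:ℝ)⁻¹) ^ G := by
            rw [hqn, inv_pow, ← zpow_natCast (p:ℝ) G, ← zpow_neg,
              ← zpow_add₀ (ne_of_gt hp0), ← zpow_add₀ (ne_of_gt hp0)]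
            congr 1
            ring
          rw [he]
          exact hG
        · rw [← zpow_add₀ (ne_of_gt hp0)]
          have he : (-(E' : ℕ) : ℤ) + 3*(m:ℤ) = -(G2 : ℤ) := by
            rw [hE'def]; push_cast; ring
          rw [he]
          have he2 : (p:ℝ) ^ (-(G2:ℤ)) = ((p:ℝ)⁻¹) ^ G2 := by
            rw [inv_pow, ← zpow_natCast (p:ℝ) G2, ← zpow_neg]
          rw [he2]
          exact hG2
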